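/- arXiv:1501.04013 — 4 statements merged into one kernel-verified Lean document; each statement's English description precedes it below -/
import Mathlib

section
/- Let ρ be a positive random variable with 𝔼[(log ρ)²] < ∞, 𝔼[ρ²] < ∞, ℙ[ρ = 1] < 1, 𝔼[log ρ] < 0 and 𝔼[ρ] ≥ 1. Then there exists a unique β with 𝔼[ρ^β log ρ] = 0 (among t ∈ [0,2] where the moment generating function g(t) = 𝔼[ρ^t] is finite); moreover 0 < β < 1 and γ := 𝔼[ρ^β] < 1. -/
open MeasureTheory Filter

noncomputable section

lemma key_le {x : ℝ} (hx : 0 < x) (s : ℝ) : x ^ s - 1 ≤ s * (x ^ s * Real.log x) := by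
  rw [Real.rpow_def_of_pos hx]
  set u := Real.log x * s with hu
  have h := Real.add_one_le_exp (-u)
  have hmul : Real.exp (-u) * Real.exp u = 1 := by rw [← Real.exp_add]; simp
  have hp := Real.exp_pos u
  have hrw : s * (Real.exp u * Real.log x) = u * Real.exp u := by rw [hu]; ring
  rw [hrw]
  nlinarith [mul_le_mul_of_nonneg_right h hp.le]

lemma key_lt {x : ℝ} (hx : 0 < x) (hx1 : x ≠ 1) {s : ℝ} (hs : s ≠ 0) :
    x ^ s - 1 < s * (x ^ s * Real.log x) := by
  rw [Real.rpow_def_of_pos hx]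
  set u := Real.log x * s with hu
  have hune : u ≠ 0 := by
    have hlog : Real.log x ≠ 0 := by
      intro he
      rcases (Real.log_eq_zero).mp he with h | h | h
      · exact hx.ne' h
      · exact hx1 h
      · linarith
    exact mul_ne_zero hlog hs
  have h := Real.add_one_lt_exp (neg_ne_zero.mpr hune)
  have hmul : Real.exp (-u) * Real.exp u = 1 := by rw [← Real.exp_add]; simp
  have hp := Real.exp_pos u
  have hrw : s * (Real.exp u * Real.log x) = u * Real.exp u := by rw [hu]; ring
  rw [hrw]
  nlinarith [mul_lt_mul_of_pos_right h hp]

lemma mono_lt {x : ℝ} (hx : 0 < x) (hx1 : x ≠ 1) {t1 t2 : ℝ} (h12 : t1 < t2) :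
    x ^ t1 * Real.log x < x ^ t2 * Real.log x := by
  have hd : (0:ℝ) < t2 - t1 := by linarith
  have h : 0 < (x ^ (t2 - t1) - 1) * Real.log x := by
    rcases lt_trichotomy x 1 with h | h | h
    · have h1 : x ^ (t2-t1) < 1 := Real.rpow_lt_one hx.le h hd
      have h2 : Real.log x < 0 := Real.log_neg hx h
      nlinarith
    · exact absurd h hx1
    · have h1 : 1 < x ^ (t2-t1) := (Real.one_lt_rpow_iff_of_pos hx).mpr (Or.inl ⟨h, hd⟩)
      have h2 : 0 < Real.log x := Real.log_pos h
      nlinarith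
  have hadd : x ^ t2 = x ^ t1 * x ^ (t2 - t1) := by
    rw [← Real.rpow_add hx]; ring_nf
  have hp : 0 < x ^ t1 := Real.rpow_pos_of_pos hx t1
  rw [hadd]; nlinarith

lemma mono_le {x : ℝ} (hx : 0 < x) {t1 t2 : ℝ} (h12 : t1 ≤ t2) :
    x ^ t1 * Real.log x ≤ x ^ t2 * Real.log x := by
  rcases eq_or_ne x 1 with rfl | hx1
  · simp
  · rcases eq_or_lt_of_le h12 with rfl | h
    · exact le_refl _
    · exact (mono_lt hx hx1 h).le

/-- **Existence and uniqueness of `β`**: if `ρ > 0` with `𝔼[(log ρ)²] < ∞`, `𝔼[ρ²] < ∞`,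
`ℙ[ρ = 1] < 1`, `𝔼[log ρ] < 0` and `𝔼[ρ] ≥ 1`, then there is a unique `β` with
`𝔼[ρ^β log ρ] = 0` (among the `t ∈ [0,2]` where the moment generating function
`g(t) = 𝔼[ρ^t]` is finite); moreover `0 < β < 1` and `γ := 𝔼[ρ^β] < 1`. -/
theorem stmt9
    {Ω : Type*} [MeasurableSpace Ω]
    (μ : Measure Ω) [IsProbabilityMeasure μ]
    (ρ : Ω → ℝ) (hρmeas : Measurable ρ) (hρpos : ∀ ω, 0 < ρ ω)
    (h1 : Integrable (fun ω => (Real.log (ρ ω)) ^ 2) μ)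
    (h2 : Integrable (fun ω => (ρ ω) ^ 2) μ)
    (h3 : μ {ω | ρ ω = 1} < 1)
    (h4 : ∫ ω, Real.log (ρ ω) ∂μ < 0)
    (h5 : 1 ≤ ∫ ω, ρ ω ∂μ) :
    ∃ β : ℝ, β ∈ Set.Ioo (0 : ℝ) 1 ∧
      Integrable (fun ω => (ρ ω) ^ β * Real.log (ρ ω)) μ ∧
      ∫ ω, (ρ ω) ^ β * Real.log (ρ ω) ∂μ = 0 ∧
      ∫ ω, (ρ ω) ^ β ∂μ < 1 ∧
      ∀ t ∈ Set.Icc (0 : ℝ) 2,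
        Integrable (fun ω => (ρ ω) ^ t * Real.log (ρ ω)) μ →
        ∫ ω, (ρ ω) ^ t * Real.log (ρ ω) ∂μ = 0 → t = β := by
  -- the set where ρ ≠ 1 has positive measure
  have hne : 0 < μ {ω | ρ ω ≠ 1} := by
    rw [pos_iff_ne_zero]
    intro h0
    have hsub : (Set.univ : Set Ω) ⊆ {ω | ρ ω = 1} ∪ {ω | ρ ω ≠ 1} := by
      intro ω _; by_cases hω : ρ ω = 1 <;> simp [hω]
    have hle : μ Set.univ ≤ μ {ω | ρ ω = 1} + μ {ω | ρ ω ≠ 1} :=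
      (measure_mono hsub).trans (measure_union_le _ _)
    rw [h0, add_zero, measure_univ] at hle
    exact absurd (lt_of_le_of_lt hle h3) (lt_irrefl _)
  have hmeaslog : Measurable (fun ω => Real.log (ρ ω)) := Real.measurable_log.comp hρmeas
  have hmeasr : ∀ t : ℝ, Measurable (fun ω => (ρ ω) ^ t) := by
    intro t
    have he : (fun ω => (ρ ω) ^ t) = fun ω => Real.exp (Real.log (ρ ω) * t) := by
      funext ω; rw [Real.rpow_def_of_pos (hρpos ω)]
    rw [he]
    exact Real.measurable_exp.comp ((Real.measurable_log.comp hρmeas).mul measurable_const)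
  -- positivity of integrals of functions vanishing only possibly on {ρ = 1}
  have hposint : ∀ f : Ω → ℝ, Integrable f μ → (∀ ω, 0 ≤ f ω) →
      (∀ ω, ρ ω ≠ 1 → 0 < f ω) → 0 < ∫ ω, f ω ∂μ := by
    intro f hf h0 hp
    rw [integral_pos_iff_support_of_nonneg h0 hf]
    refine lt_of_lt_of_le hne (measure_mono ?_)
    intro ω hω
    exact (hp ω hω).ne'
  -- integrability of ρ^t for t ∈ [0,2]
  have hDint : Integrable (fun ω => (ρ ω)^2 + (1 + (Real.log (ρ ω))^2)) μ :=
    h2.add ((integrable_const 1).add h1)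
  have hIA : ∀ t ∈ Set.Icc (0:ℝ) 2, Integrable (fun ω => (ρ ω) ^ t) μ := by
    intro t ht
    refine hDint.mono (hmeasr t).aestronglyMeasurable ?_
    filter_upwards with ω
    have hx := hρpos ω
    rw [Real.norm_eq_abs, Real.norm_eq_abs, abs_of_nonneg (Real.rpow_nonneg hx.le t),
      abs_of_nonneg (by positivity : (0:ℝ) ≤ (ρ ω)^2 + (1 + (Real.log (ρ ω))^2))]
    rcases le_or_gt (ρ ω) 1 with hle | hlt
    · have := Real.rpow_le_one hx.le hle ht.1
      nlinarith [sq_nonneg (ρ ω), sq_nonneg (Real.log (ρ ω))]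
    · have h1' : (ρ ω) ^ t ≤ (ρ ω) ^ (2:ℝ) := Real.rpow_le_rpow_of_exponent_le hlt.le ht.2
      have h2' : (ρ ω) ^ (2:ℝ) = (ρ ω) ^ (2:ℕ) := by
        rw [show ((2:ℝ) = ((2:ℕ):ℝ)) by norm_num, Real.rpow_natCast]
      rw [h2'] at h1'
      nlinarith [h1', sq_nonneg (Real.log (ρ ω))]
  -- uniform bound for ρ^t log ρ, t ∈ [0,1]
  have hbound : ∀ t ∈ Set.Icc (0:ℝ) 1, ∀ ω,
      ‖(ρ ω) ^ t * Real.log (ρ ω)‖ ≤ (ρ ω)^2 + (1 + (Real.log (ρ ω))^2) := by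
    intro t ht ω
    have hx := hρpos ω
    rw [Real.norm_eq_abs, abs_mul, abs_of_nonneg (Real.rpow_nonneg hx.le t)]
    rcases le_or_gt (ρ ω) 1 with hle | hlt
    · have hone : (ρ ω) ^ t ≤ 1 := Real.rpow_le_one hx.le hle ht.1
      have habs : |Real.log (ρ ω)| ≤ 1 + (Real.log (ρ ω))^2 := by
        nlinarith [sq_abs (Real.log (ρ ω)), abs_nonneg (Real.log (ρ ω)),
          sq_nonneg (|Real.log (ρ ω)| - 1)]
      nlinarith [abs_nonneg (Real.log (ρ ω)), Real.rpow_nonneg hx.le t, sq_nonneg (ρ ω)]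
    · have hlog : 0 ≤ Real.log (ρ ω) := Real.log_nonneg hlt.le
      rw [abs_of_nonneg hlog]
      have h1' : (ρ ω) ^ t ≤ (ρ ω) ^ (1:ℝ) := Real.rpow_le_rpow_of_exponent_le hlt.le ht.2
      rw [Real.rpow_one] at h1'
      have h2' : Real.log (ρ ω) ≤ ρ ω - 1 := Real.log_le_sub_one_of_pos hx
      have h3' : (ρ ω) ^ t * Real.log (ρ ω) ≤ (ρ ω) * Real.log (ρ ω) :=
        mul_le_mul_of_nonneg_right h1' hlog
      nlinarith [sq_nonneg (Real.log (ρ ω)), hlt]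
  -- integrability of ρ^t log ρ for t ∈ [0,1]
  have hIB : ∀ t ∈ Set.Icc (0:ℝ) 1,
      Integrable (fun ω => (ρ ω) ^ t * Real.log (ρ ω)) μ := by
    intro t ht
    refine hDint.mono ((hmeasr _).mul hmeaslog).aestronglyMeasurable ?_
    filter_upwards with ω
    rw [Real.norm_eq_abs (((ρ ω) ^ t * Real.log (ρ ω))), ← Real.norm_eq_abs]
    calc ‖(ρ ω) ^ t * Real.log (ρ ω)‖ ≤ (ρ ω)^2 + (1 + (Real.log (ρ ω))^2) := hbound t ht ω
      _ ≤ ‖(ρ ω)^2 + (1 + (Real.log (ρ ω))^2)‖ := le_abs_self _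
  -- strict monotonicity of t ↦ ∫ ρ^t log ρ
  have hmono : ∀ t1 t2 : ℝ, t1 < t2 →
      Integrable (fun ω => (ρ ω) ^ t1 * Real.log (ρ ω)) μ →
      Integrable (fun ω => (ρ ω) ^ t2 * Real.log (ρ ω)) μ →
      ∫ ω, (ρ ω) ^ t1 * Real.log (ρ ω) ∂μ < ∫ ω, (ρ ω) ^ t2 * Real.log (ρ ω) ∂μ := by
    intro t1 t2 h12 hi1 hi2
    have hpos := hposint (fun ω => (ρ ω) ^ t2 * Real.log (ρ ω) - (ρ ω) ^ t1 * Real.log (ρ ω))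
      (hi2.sub hi1)
      (fun ω => sub_nonneg.mpr (mono_le (hρpos ω) h12.le))
      (fun ω hω => sub_pos.mpr (mono_lt (hρpos ω) hω h12))
    rw [integral_sub hi2 hi1] at hpos
    linarith
  -- value at 0 is negative
  have hI0 : ∫ ω, (ρ ω) ^ (0:ℝ) * Real.log (ρ ω) ∂μ < 0 := by
    have he : (fun ω => (ρ ω) ^ (0:ℝ) * Real.log (ρ ω)) = fun ω => Real.log (ρ ω) := by
      funext ω; rw [Real.rpow_zero, one_mul]
    rw [he]; exact h4
  -- ρ is integrable
  have hIρ : Integrable ρ μ := by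
    refine hDint.mono hρmeas.aestronglyMeasurable ?_
    filter_upwards with ω
    have hx := hρpos ω
    rw [Real.norm_eq_abs, Real.norm_eq_abs, abs_of_pos hx,
      abs_of_nonneg (by positivity : (0:ℝ) ≤ (ρ ω)^2 + (1 + (Real.log (ρ ω))^2))]
    nlinarith [sq_nonneg (ρ ω - 1), sq_nonneg (Real.log (ρ ω))]
  -- value at 1 is positive
  have hI1' : Integrable (fun ω => (ρ ω) ^ (1:ℝ) * Real.log (ρ ω)) μ :=
    hIB 1 ⟨zero_le_one, le_refl 1⟩
  have hI1 : 0 < ∫ ω, (ρ ω) ^ (1:ℝ) * Real.log (ρ ω) ∂μ := by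
    have hintsub : Integrable (fun ω => ρ ω - 1) μ := hIρ.sub (integrable_const 1)
    have hf : 0 < ∫ ω, ((ρ ω) ^ (1:ℝ) * Real.log (ρ ω) - (ρ ω - 1)) ∂μ := by
      refine hposint _ (hI1'.sub hintsub) (fun ω => ?_) (fun ω hω => ?_)
      · have := key_le (hρpos ω) 1
        rw [Real.rpow_one] at this
        rw [Real.rpow_one]
        linarith
      · have := key_lt (hρpos ω) hω one_ne_zero
        rw [Real.rpow_one] at this
        rw [Real.rpow_one]
        linarith
    rw [integral_sub hI1' hintsub, integral_sub hIρ (integrable_const 1), integral_const] at hf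
    simp only [measure_univ, probReal_univ, ENNReal.toReal_one, smul_eq_mul, one_mul, mul_one] at hf
    linarith
  -- continuity of t ↦ ∫ ρ^t log ρ on [0,1]
  have hcont : ContinuousOn (fun t => ∫ ω, (ρ ω) ^ t * Real.log (ρ ω) ∂μ)
      (Set.Icc (0:ℝ) 1) := by
    intro t ht
    apply continuousWithinAt_of_dominated
      (bound := fun ω => (ρ ω)^2 + (1 + (Real.log (ρ ω))^2))
    · exact Eventually.of_forall fun t' =>
        ((hmeasr _).mul hmeaslog).aestronglyMeasurable
    · filter_upwards [self_mem_nhdsWithin] with t' ht'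
      filter_upwards with ω
      exact hbound t' ht' ω
    · exact hDint
    · filter_upwards with ω
      have hx := hρpos ω
      have he : (fun t' : ℝ => (ρ ω) ^ t' * Real.log (ρ ω)) =
          fun t' => Real.exp (Real.log (ρ ω) * t') * Real.log (ρ ω) := by
        funext t'; rw [Real.rpow_def_of_pos hx]
      rw [he]
      exact ((Real.continuous_exp.comp ((continuous_const.mul continuous_id'))).mul
        continuous_const).continuousWithinAt
  -- intermediate value theorem gives β
  obtain ⟨β, hβmem, hβval⟩ :=
    intermediate_value_Ioo zero_le_one hcont (Set.mem_Ioo.mpr ⟨hI0, hI1⟩)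
  have hβval' : ∫ ω, (ρ ω) ^ β * Real.log (ρ ω) ∂μ = 0 := hβval
  have hβIcc : β ∈ Set.Icc (0:ℝ) 1 := ⟨hβmem.1.le, hβmem.2.le⟩
  have hβint : Integrable (fun ω => (ρ ω) ^ β * Real.log (ρ ω)) μ := hIB β hβIcc
  have hβρint : Integrable (fun ω => (ρ ω) ^ β) μ :=
    hIA β ⟨hβmem.1.le, by linarith [hβmem.2]⟩
  refine ⟨β, hβmem, hβint, hβval', ?_, ?_⟩
  · -- γ = ∫ ρ^β < 1
    have hintsub : Integrable (fun ω => (ρ ω) ^ β - 1) μ := hβρint.sub (integrable_const 1)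
    have hf : 0 < ∫ ω, (β * ((ρ ω) ^ β * Real.log (ρ ω)) - ((ρ ω) ^ β - 1)) ∂μ := by
      refine hposint _ ((hβint.const_mul β).sub hintsub) (fun ω => ?_) (fun ω hω => ?_)
      · have := key_le (hρpos ω) β
        linarith
      · have := key_lt (hρpos ω) hω hβmem.1.ne'
        linarith
    rw [integral_sub (hβint.const_mul β) hintsub, integral_const_mul β, hβval',
      integral_sub hβρint (integrable_const 1), integral_const] at hf
    simp only [measure_univ, probReal_univ, ENNReal.toReal_one, smul_eq_mul, one_mul, mul_zero] at hf
    linarith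
  · -- uniqueness
    intro t ht hint hval
    by_contra hne'
    rcases lt_or_gt_of_ne hne' with h | h
    · have := hmono t β h hint hβint
      rw [hval, hβval'] at this
      exact absurd this (lt_irrefl 0)
    · have := hmono β t h hβint hint
      rw [hval, hβval'] at this
      exact absurd this (lt_irrefl 0)
end
end

section
/- Let ε > 0, let k ≤ m be positive integers, let ρ₁,…,ρ_m be positive reals with partial sums Y_j = log ρ₁ + … + log ρ_j satisfying Y_j ≥ ε·j for all 1 ≤ j ≤ m, and let M₁,…,M_m be nonnegative integers with M₁ = … = M_k = 0 and M_n < n for k < n ≤ m. Define X₀ = 1 and X_n = max(ρ_n·X_{n−1} − M_n, 0). Then X_j = exp(Y_j) for 1 ≤ j ≤ k and X_j ≥ exp(Y_j)·(1 − Σ_{n=k+1}^{j} n·exp(−Y_n)) for k < j ≤ m; in particular, if c := 1 − Σ_{n=k+1}^{∞} n·e^{−εn} > 0, then X_j ≥ c·exp(Y_j) ≥ c·e^{εj} > 0 for all 1 ≤ j ≤ m. -/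
open Finset

noncomputable section

/-- **Deterministic lower bound for the random-difference-equation recursion**
(step in the proof of Proposition 2.1): let `ε > 0`, `1 ≤ k ≤ m`, let `ρ_n > 0` with
`Y_j = log ρ₁ + … + log ρ_j ≥ ε·j` for `1 ≤ j ≤ m`, and let `M_n ∈ ℕ₀` with
`M₁ = … = M_k = 0` and `M_n < n` for `k < n ≤ m`. Define `X₀ = 1`,
`X_n = (ρ_n X_{n-1} − M_n)₊`. Then `X_j = exp(Y_j)` for `1 ≤ j ≤ k`,
`X_j ≥ exp(Y_j)(1 − ∑_{n=k+1}^j n·exp(−Y_n))` for `k < j ≤ m`, and if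
`c := 1 − ∑_{n=k+1}^∞ n·e^{−εn} > 0`, then `X_j ≥ c·exp(Y_j) ≥ c·e^{εj} > 0`
for all `1 ≤ j ≤ m`. -/
theorem stmt11
    (ε : ℝ) (hε : 0 < ε)
    (k m : ℕ) (hk : 1 ≤ k) (hkm : k ≤ m)
    (ρ : ℕ → ℝ) (hρ : ∀ n, 0 < ρ n)
    (M : ℕ → ℕ)
    (Y : ℕ → ℝ) (hY : ∀ j, Y j = ∑ i ∈ Finset.Icc 1 j, Real.log (ρ i))
    (hYε : ∀ j, 1 ≤ j → j ≤ m → ε * j ≤ Y j)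
    (hM0 : ∀ n, 1 ≤ n → n ≤ k → M n = 0)
    (hMlt : ∀ n, k < n → n ≤ m → (M n : ℝ) < n)
    (X : ℕ → ℝ) (hX0 : X 0 = 1)
    (hXrec : ∀ n, X (n + 1) = max (ρ (n + 1) * X n - M (n + 1)) 0) :
    (∀ j, 1 ≤ j → j ≤ k → X j = Real.exp (Y j)) ∧
    (∀ j, k < j → j ≤ m →
      Real.exp (Y j) * (1 - ∑ n ∈ Finset.Icc (k + 1) j, (n : ℝ) * Real.exp (-Y n))
        ≤ X j) ∧
    (∀ c : ℝ,
      c = 1 - ∑' n : ℕ, (if k + 1 ≤ n then (n : ℝ) * Real.exp (-(ε * n)) else 0) →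
      0 < c →
      ∀ j, 1 ≤ j → j ≤ m →
        0 < c * Real.exp (ε * j) ∧
        c * Real.exp (ε * j) ≤ c * Real.exp (Y j) ∧
        c * Real.exp (Y j) ≤ X j) := by
  have hYsucc : ∀ j : ℕ, Y (j + 1) = Y j + Real.log (ρ (j + 1)) := by
    intro j
    rw [hY, hY, Finset.sum_Icc_succ_top (by omega : 1 ≤ j + 1)]
  have hexps : ∀ j : ℕ, Real.exp (Y (j + 1)) = ρ (j + 1) * Real.exp (Y j) := by
    intro j
    rw [hYsucc, Real.exp_add, Real.exp_log (hρ (j + 1)), mul_comm]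
  -- Part 1 (including j = 0)
  have h1 : ∀ j, j ≤ k → X j = Real.exp (Y j) := by
    intro j
    induction j with
    | zero => intro _; simp [hX0, hY]
    | succ n ih =>
      intro hle
      have hn := ih (Nat.le_of_succ_le hle)
      rw [hXrec, hM0 (n + 1) (by omega) hle, hn, hexps]
      have hpos : 0 < ρ (n + 1) * Real.exp (Y n) :=
        mul_pos (hρ (n + 1)) (Real.exp_pos _)
      push_cast
      rw [sub_zero, max_eq_left hpos.le]
  -- Part 2 (starting at j = k)
  have h2 : ∀ j, k ≤ j → j ≤ m →
      Real.exp (Y j) * (1 - ∑ n ∈ Finset.Icc (k + 1) j, (n : ℝ) * Real.exp (-Y n))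
        ≤ X j := by
    intro j
    induction j with
    | zero => intro h _; omega
    | succ n ih =>
      intro hkj hjm
      by_cases hc : k ≤ n
      · have hIH := ih hc (Nat.le_of_succ_le hjm)
        have hsum : ∑ i ∈ Finset.Icc (k + 1) (n + 1), (i : ℝ) * Real.exp (-Y i)
            = (∑ i ∈ Finset.Icc (k + 1) n, (i : ℝ) * Real.exp (-Y i))
              + ((n : ℝ) + 1) * Real.exp (-Y (n + 1)) := by
          rw [Finset.sum_Icc_succ_top (by omega : k + 1 ≤ n + 1)]
          push_cast; ring
        set S := ∑ i ∈ Finset.Icc (k + 1) n, (i : ℝ) * Real.exp (-Y i) with hS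
        have hprod : Real.exp (Y (n + 1)) * Real.exp (-Y (n + 1)) = 1 := by
          rw [← Real.exp_add, add_neg_cancel, Real.exp_zero]
        have heq : Real.exp (Y (n + 1)) * (1 - (S + ((n : ℝ) + 1) * Real.exp (-Y (n + 1))))
            = Real.exp (Y (n + 1)) * (1 - S) - ((n : ℝ) + 1) := by
          have := hprod; nlinarith [hprod]
        rw [hsum, heq]
        have hM : (M (n + 1) : ℝ) ≤ (n : ℝ) + 1 := by
          have := hMlt (n + 1) (by omega) hjm
          push_cast at this ⊢; linarith
        have hstep : ρ (n + 1) * Real.exp (Y n) * (1 - S) ≤ ρ (n + 1) * X n := by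
          rw [mul_assoc]
          exact mul_le_mul_of_nonneg_left hIH (hρ (n + 1)).le
        have : Real.exp (Y (n + 1)) * (1 - S) - ((n : ℝ) + 1)
            ≤ ρ (n + 1) * X n - M (n + 1) := by
          rw [hexps]
          have := hstep
          linarith
        rw [hXrec]
        exact le_trans this (le_max_left _ _)
      · have hkeq : k = n + 1 := by omega
        have hempty : Finset.Icc (k + 1) (n + 1) = ∅ := by
          apply Finset.Icc_eq_empty; omega
        rw [hempty, Finset.sum_empty, sub_zero, mul_one, h1 (n + 1) (by omega)]
  refine ⟨fun j h1j hjk => h1 j hjk, fun j hkj hjm => h2 j hkj.le hjm, ?_⟩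
  -- Part 3
  intro c hc hcpos j h1j hjm
  set f : ℕ → ℝ := fun n => if k + 1 ≤ n then (n : ℝ) * Real.exp (-(ε * n)) else 0 with hf
  have hfnonneg : ∀ n, 0 ≤ f n := by
    intro n
    simp only [hf]
    split
    · positivity
    · exact le_refl 0
  have hgsum : Summable (fun n : ℕ => (n : ℝ) * Real.exp (-ε) ^ n) := by
    have : ‖Real.exp (-ε)‖ < 1 := by
      rw [Real.norm_eq_abs, abs_of_pos (Real.exp_pos _)]
      exact Real.exp_lt_one_iff.mpr (by linarith)
    simpa using summable_pow_mul_geometric_of_norm_lt_one 1 this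
  have hfle : ∀ n, f n ≤ (n : ℝ) * Real.exp (-ε) ^ n := by
    intro n
    have hrw : Real.exp (-(ε * n)) = Real.exp (-ε) ^ n := by
      rw [← Real.exp_nat_mul]; ring_nf
    simp only [hf]
    split
    · rw [hrw]
    · positivity
  have hfsum : Summable f := Summable.of_nonneg_of_le hfnonneg hfle hgsum
  have htsum_nonneg : 0 ≤ ∑' n, f n := tsum_nonneg hfnonneg
  have hcle1 : c ≤ 1 := by rw [hc]; linarith
  have hεY : ε * j ≤ Y j := hYε j h1j hjm
  refine ⟨by positivity, ?_, ?_⟩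
  · exact mul_le_mul_of_nonneg_left (Real.exp_le_exp.2 hεY) hcpos.le
  · by_cases hjk : j ≤ k
    · rw [h1 j hjk]
      nlinarith [Real.exp_pos (Y j)]
    · push_neg at hjk
      have hX := h2 j hjk.le hjm
      have hterm : ∀ n ∈ Finset.Icc (k + 1) j, (n : ℝ) * Real.exp (-Y n) ≤ f n := by
        intro n hn
        rw [Finset.mem_Icc] at hn
        simp only [hf, if_pos hn.1]
        apply mul_le_mul_of_nonneg_left _ (Nat.cast_nonneg n)
        apply Real.exp_le_exp.2
        have := hYε n (by omega) (le_trans hn.2 hjm)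
        linarith
      have hS : ∑ n ∈ Finset.Icc (k + 1) j, (n : ℝ) * Real.exp (-Y n) ≤ ∑' n, f n := by
        calc ∑ n ∈ Finset.Icc (k + 1) j, (n : ℝ) * Real.exp (-Y n)
            ≤ ∑ n ∈ Finset.Icc (k + 1) j, f n := Finset.sum_le_sum hterm
          _ ≤ ∑' n, f n := Summable.sum_le_tsum _ (fun n _ => hfnonneg n) hfsum
      have : c ≤ 1 - ∑ n ∈ Finset.Icc (k + 1) j, (n : ℝ) * Real.exp (-Y n) := by
        rw [hc]; linarith
      calc c * Real.exp (Y j)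
          ≤ (1 - ∑ n ∈ Finset.Icc (k + 1) j, (n : ℝ) * Real.exp (-Y n)) * Real.exp (Y j) := by
            nlinarith [Real.exp_pos (Y j)]
        _ = Real.exp (Y j) * (1 - ∑ n ∈ Finset.Icc (k + 1) j, (n : ℝ) * Real.exp (-Y n)) := by
            ring
        _ ≤ X j := hX
end
end

section
/- Let (U_i)_{i≥1} be i.i.d. real random variables with partial sums Y_j = U₁ + … + U_j, let κ > 0 and κ̃ ∈ (0,1], and set ε = κ·κ̃. Then for every m ∈ ℕ: ℙ[Y_j ≥ ε·j for all 1 ≤ j ≤ m] ≥ ℙ[U₁ > κ]^{κ̃m+1} · ℙ[Y_j ≥ 0 for all 1 ≤ j ≤ m]. -/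
open MeasureTheory ProbabilityTheory Filter ENNReal

noncomputable section

/-- Sum of first `l` shifted coordinates equals an interval sum. -/
lemma sum_shift_aux (f : ℕ → ℝ) (m c l : ℕ) (hlm : l ≤ m) :
    (∑ t : Fin m, if (t : ℕ) < l then f (c + 1 + (t : ℕ)) else 0)
      = ∑ i ∈ Finset.Icc (c + 1) (c + l), f i := by
  rw [Fin.sum_univ_eq_sum_range (fun t => if t < l then f (c + 1 + t) else 0) m,
    Finset.sum_ite, Finset.sum_const_zero, add_zero]
  have h1 : (Finset.range m).filter (fun t => t < l) = Finset.range l := by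
    ext a; simp only [Finset.mem_filter, Finset.mem_range]; omega
  rw [h1]
  have h2 : Finset.Icc (c + 1) (c + l) = Finset.Ico (c + 1) (c + l + 1) := by
    ext a; simp only [Finset.mem_Icc, Finset.mem_Ico]; omega
  rw [h2, Finset.sum_Ico_eq_sum_range]
  have h3 : c + l + 1 - (c + 1) = l := by omega
  rw [h3]

/-- The joint law of finitely many independent random variables is the product
of the marginal laws (allowing reindexing along an injective map). -/
lemma map_tuple_eq_pi {Ω : Type*} [MeasurableSpace Ω] (μ : Measure Ω) [IsProbabilityMeasure μ]
    (U : ℕ → Ω → ℝ) (hUmeas : ∀ i, Measurable (U i))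
    (hiid : iIndepFun U μ)
    {n : ℕ} (e : Fin n → ℕ) (he : Function.Injective e) :
    μ.map (fun ω (i : Fin n) => U (e i) ω)
      = Measure.pi (fun i => μ.map (U (e i))) := by
  classical
  refine (Measure.pi_eq ?_).symm
  intro s hs
  rw [Measure.map_apply (measurable_pi_lambda _ fun i => hUmeas _)
    (MeasurableSet.univ_pi hs)]
  set t : ℕ → Set Ω := fun i =>
    U i ⁻¹' (⋂ j ∈ Finset.univ.filter (fun j => e j = i), s j) with ht
  have hpre : (fun ω (i : Fin n) => U (e i) ω) ⁻¹' Set.pi Set.univ s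
      = ⋂ i ∈ Finset.univ.image e, t i := by
    ext ω
    simp only [Set.mem_preimage, Set.mem_pi, Set.mem_univ, forall_true_left, ht,
      Set.mem_iInter, Finset.mem_image, Finset.mem_filter, Finset.mem_univ, true_and]
    constructor
    · rintro h i ⟨j, -, rfl⟩
      intro j' hj'
      rw [← hj']
      exact h j'
    · intro h j
      exact h (e j) ⟨j, rfl⟩ j rfl
  have hmeas' : ∀ i ∈ Finset.univ.image e,
      MeasurableSet[(inferInstance : MeasurableSpace ℝ).comap (U i)] (t i) := by
    intro i _
    rw [MeasurableSpace.measurableSet_comap]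
    exact ⟨_, MeasurableSet.biInter (Finset.countable_toSet _) (fun j _ => hs j), rfl⟩
  rw [hpre, hiid.meas_biInter hmeas',
    Finset.prod_image (fun a _ b _ hab => he hab)]
  refine Finset.prod_congr rfl fun j _ => ?_
  have hfil : Finset.univ.filter (fun j' => e j' = e j) = {j} := by
    ext a; simp [he.eq_iff]
  rw [ht]
  simp only [hfil]
  rw [Measure.map_apply (hUmeas _) (hs j)]
  congr 1
  simp

/-- **Lower bound (2.3) for the probability of linear growth of a random walk**: let
`(U_i)_{i≥1}` be i.i.d. real random variables with partial sums `Y_j = U₁ + … + U_j`,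
let `κ > 0`, `κ̃ ∈ (0,1]` and `ε = κ·κ̃`. Then for every `m ≥ 1`,
`ℙ[∀ 1 ≤ j ≤ m, Y_j ≥ ε·j] ≥ ℙ[U₁ > κ]^{κ̃ m + 1} · ℙ[∀ 1 ≤ j ≤ m, Y_j ≥ 0]`. -/
theorem stmt12
    {Ω : Type*} [MeasurableSpace Ω]
    (μ : Measure Ω) [IsProbabilityMeasure μ]
    (U : ℕ → Ω → ℝ) (hUmeas : ∀ i, Measurable (U i))
    (hiid : iIndepFun U μ)
    (hident : ∀ i, IdentDistrib (U i) (U 1) μ μ)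
    (κ κ' : ℝ) (hκ : 0 < κ) (hκ' : κ' ∈ Set.Ioc (0 : ℝ) 1)
    (ε : ℝ) (hε : ε = κ * κ')
    (Y : ℕ → Ω → ℝ) (hY : ∀ j ω, Y j ω = ∑ i ∈ Finset.Icc 1 j, U i ω) :
    ∀ m : ℕ, 1 ≤ m →
      (μ {ω | κ < U 1 ω}) ^ (κ' * m + 1 : ℝ)
          * μ {ω | ∀ j, 1 ≤ j → j ≤ m → 0 ≤ Y j ω}
        ≤ μ {ω | ∀ j, 1 ≤ j → j ≤ m → ε * j ≤ Y j ω} := by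
  classical
  intro m hm
  obtain ⟨hκ'0, hκ'1⟩ := hκ'
  set p : ℝ≥0∞ := μ {ω | κ < U 1 ω} with hp
  set k : ℕ := ⌈κ' * m⌉₊ with hk
  have hkge : (κ' * m : ℝ) ≤ k := Nat.le_ceil _
  have hkle : (k : ℝ) ≤ κ' * m + 1 :=
    le_of_lt (Nat.ceil_lt_add_one (by positivity))
  -- The two events
  set A : Set Ω := ⋂ i ∈ Finset.Icc 1 k, U i ⁻¹' Set.Ioi κ with hA_def
  set B : Set Ω :=
    {ω | ∀ l, 1 ≤ l → l ≤ m → 0 ≤ ∑ i ∈ Finset.Icc (k + 1) (k + l), U i ω} with hB_def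
  -- Inclusion into the target event
  have hsub : A ∩ B ⊆ {ω | ∀ j, 1 ≤ j → j ≤ m → ε * j ≤ Y j ω} := by
    rintro ω ⟨hA, hB⟩ j hj1 hjm
    have hAmem : ∀ i ∈ Finset.Icc 1 k, κ < U i ω := by
      intro i hi
      have := Set.mem_iInter₂.mp hA i hi
      exact this
    rw [hY]
    by_cases hjk : j ≤ k
    · -- all increments exceed κ
      have h1 : (j : ℝ) * κ ≤ ∑ i ∈ Finset.Icc 1 j, U i ω := by
        calc (j : ℝ) * κ = ∑ _i ∈ Finset.Icc 1 j, κ := by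
              rw [Finset.sum_const, Nat.card_Icc]
              simp [nsmul_eq_mul]
          _ ≤ ∑ i ∈ Finset.Icc 1 j, U i ω := by
              refine Finset.sum_le_sum fun i hi => le_of_lt (hAmem i ?_)
              rw [Finset.mem_Icc] at hi ⊢
              omega
      have h2 : ε * j ≤ (j : ℝ) * κ := by
        rw [hε, mul_comm (j : ℝ) κ]
        have : κ * κ' * j ≤ κ * 1 * j := by
          apply mul_le_mul_of_nonneg_right _ (Nat.cast_nonneg j)
          exact mul_le_mul_of_nonneg_left hκ'1 hκ.le
        simpa using this
      linarith
    · push_neg at hjk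
      -- split the sum at k
      have hsplit : Finset.Icc 1 j = Finset.Icc 1 k ∪ Finset.Icc (k + 1) j := by
        ext a; simp only [Finset.mem_union, Finset.mem_Icc]; omega
      have hdisj : Disjoint (Finset.Icc 1 k) (Finset.Icc (k + 1) j) := by
        rw [Finset.disjoint_left]
        intro a ha hb
        rw [Finset.mem_Icc] at ha hb
        omega
      rw [hsplit, Finset.sum_union hdisj]
      have h1 : (k : ℝ) * κ ≤ ∑ i ∈ Finset.Icc 1 k, U i ω := by
        calc (k : ℝ) * κ = ∑ _i ∈ Finset.Icc 1 k, κ := by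
              rw [Finset.sum_const, Nat.card_Icc]
              simp [nsmul_eq_mul]
          _ ≤ _ := Finset.sum_le_sum fun i hi => le_of_lt (hAmem i hi)
      have h2 : (0 : ℝ) ≤ ∑ i ∈ Finset.Icc (k + 1) j, U i ω := by
        have hl1 : 1 ≤ j - k := by omega
        have hl2 : j - k ≤ m := by omega
        have := hB (j - k) hl1 hl2
        have hjk' : k + (j - k) = j := by omega
        rwa [hjk'] at this
      have h3 : ε * j ≤ (k : ℝ) * κ := by
        rw [hε]
        have : κ * κ' * j ≤ κ * κ' * m :=
          mul_le_mul_of_nonneg_left (Nat.cast_le.mpr hjm) (by positivity)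
        have h4 : κ * (κ' * m) ≤ κ * k := mul_le_mul_of_nonneg_left hkge hκ.le
        nlinarith
      linarith
  -- A and B are independent
  set T : Finset ℕ := Finset.Icc (k + 1) (k + m) with hT
  have hST : Disjoint (Finset.Icc 1 k) T := by
    rw [Finset.disjoint_left]
    intro a ha hb
    rw [hT, Finset.mem_Icc] at hb
    rw [Finset.mem_Icc] at ha
    omega
  have hindepF := hiid.indepFun_finset (Finset.Icc 1 k) T hST hUmeas
  set SA : Set (↥(Finset.Icc 1 k) → ℝ) := {x | ∀ i, κ < x i} with hSA
  set SB : Set (↥T → ℝ) :=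
    {x | ∀ l, 1 ≤ l → l ≤ m →
      0 ≤ ∑ i : ↥T, if (i : ℕ) ≤ k + l then x i else 0} with hSB
  have hSAm : MeasurableSet SA := by
    have : SA = ⋂ i : ↥(Finset.Icc 1 k), {x | κ < x i} := by
      ext x; simp [hSA]
    rw [this]
    exact MeasurableSet.iInter fun i =>
      measurableSet_lt measurable_const (measurable_pi_apply i)
  have hSBm : MeasurableSet SB := by
    have : SB = ⋂ l ∈ Finset.Icc 1 m, {x : ↥T → ℝ |
        0 ≤ ∑ i : ↥T, if (i : ℕ) ≤ k + l then x i else 0} := by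
      ext x
      simp only [hSB, Set.mem_iInter, Set.mem_setOf_eq, Finset.mem_Icc]
      constructor
      · intro h l hl; exact h l hl.1 hl.2
      · intro h l h1 h2; exact h l ⟨h1, h2⟩
    rw [this]
    refine MeasurableSet.biInter (Finset.countable_toSet _) fun l _ => ?_
    refine measurableSet_le measurable_const (Finset.measurable_sum _ fun i _ => ?_)
    split
    · exact measurable_pi_apply i
    · exact measurable_const
  have hApre : A = (fun ω (i : ↥(Finset.Icc 1 k)) => U i ω) ⁻¹' SA := by
    ext ω
    simp only [hA_def, Set.mem_iInter, Set.mem_preimage, hSA, Set.mem_setOf_eq,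
      Set.mem_Ioi]
    constructor
    · intro h i; exact h i i.2
    · intro h i hi; exact h ⟨i, hi⟩
  have hsumB : ∀ (ω : Ω) (l : ℕ), l ≤ m →
      (∑ i : ↥T, if (i : ℕ) ≤ k + l then U i ω else 0)
        = ∑ i ∈ Finset.Icc (k + 1) (k + l), U i ω := by
    intro ω l hl
    rw [Finset.sum_coe_sort T (fun i => if i ≤ k + l then U i ω else 0),
      Finset.sum_ite, Finset.sum_const_zero, add_zero]
    congr 1
    ext a
    simp only [Finset.mem_filter, hT, Finset.mem_Icc]
    omega
  have hBpre : B = (fun ω (i : ↥T) => U i ω) ⁻¹' SB := by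
    ext ω
    simp only [hB_def, Set.mem_setOf_eq, Set.mem_preimage, hSB]
    constructor
    · intro h l h1 h2; rw [hsumB ω l h2]; exact h l h1 h2
    · intro h l h1 h2; have := h l h1 h2; rwa [hsumB ω l h2] at this
  have hindep : μ (A ∩ B) = μ A * μ B := by
    rw [hApre, hBpre]
    exact hindepF.measure_inter_preimage_eq_mul _ _ hSAm hSBm
  -- μ A = p ^ k
  have hA_val : μ A = p ^ k := by
    rw [hA_def, hiid.meas_biInter (S := Finset.Icc 1 k)
      (fun i _ => ⟨Set.Ioi κ, measurableSet_Ioi, rfl⟩)]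
    have : ∀ i ∈ Finset.Icc 1 k, μ (U i ⁻¹' Set.Ioi κ) = p := by
      intro i _
      rw [hp]
      have : {ω | κ < U 1 ω} = U 1 ⁻¹' Set.Ioi κ := rfl
      rw [this]
      exact (hident i).measure_mem_eq measurableSet_Ioi
    rw [Finset.prod_congr rfl this, Finset.prod_const, Nat.card_Icc]
    simp
  -- μ B = μ B₀ by shift invariance
  set ν : Measure ℝ := μ.map (U 1) with hν
  set S : Set (Fin m → ℝ) :=
    {x | ∀ l, 1 ≤ l → l ≤ m →
      0 ≤ ∑ t : Fin m, if (t : ℕ) < l then x t else 0} with hS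
  have hSm : MeasurableSet S := by
    have : S = ⋂ l ∈ Finset.Icc 1 m, {x : Fin m → ℝ |
        0 ≤ ∑ t : Fin m, if (t : ℕ) < l then x t else 0} := by
      ext x
      simp only [hS, Set.mem_iInter, Set.mem_setOf_eq, Finset.mem_Icc]
      constructor
      · intro h l hl; exact h l hl.1 hl.2
      · intro h l h1 h2; exact h l ⟨h1, h2⟩
    rw [this]
    refine MeasurableSet.biInter (Finset.countable_toSet _) fun l _ => ?_
    refine measurableSet_le measurable_const (Finset.measurable_sum _ fun t _ => ?_)
    split
    · exact measurable_pi_apply t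
    · exact measurable_const
  have hmap : ∀ c : ℕ, μ.map (fun ω (t : Fin m) => U (c + 1 + (t : ℕ)) ω)
      = Measure.pi (fun _ : Fin m => ν) := by
    intro c
    have hinj : Function.Injective (fun t : Fin m => c + 1 + (t : ℕ)) := by
      intro a b hab
      simp only at hab
      exact Fin.ext (by omega)
    rw [map_tuple_eq_pi μ U hUmeas hiid _ hinj]
    congr 1
    ext t : 1
    exact (hident (c + 1 + (t : ℕ))).map_eq
  have hBval : ∀ c : ℕ, μ ((fun ω (t : Fin m) => U (c + 1 + (t : ℕ)) ω) ⁻¹' S)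
      = Measure.pi (fun _ : Fin m => ν) S := by
    intro c
    rw [← hmap c, Measure.map_apply (measurable_pi_lambda _ fun t => hUmeas _) hSm]
  have hBeq : μ B = μ {ω | ∀ j, 1 ≤ j → j ≤ m → 0 ≤ Y j ω} := by
    have h1 : B = (fun ω (t : Fin m) => U (k + 1 + (t : ℕ)) ω) ⁻¹' S := by
      ext ω
      simp only [hB_def, Set.mem_setOf_eq, Set.mem_preimage, hS]
      constructor
      · intro h l h1 h2
        rw [sum_shift_aux (fun i => U i ω) m k l h2]
        exact h l h1 h2
      · intro h l h1 h2
        have := h l h1 h2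
        rwa [sum_shift_aux (fun i => U i ω) m k l h2] at this
    have h2 : {ω | ∀ j, 1 ≤ j → j ≤ m → 0 ≤ Y j ω}
        = (fun ω (t : Fin m) => U (0 + 1 + (t : ℕ)) ω) ⁻¹' S := by
      ext ω
      simp only [Set.mem_setOf_eq, Set.mem_preimage, hS]
      constructor
      · intro h l h1 h2
        rw [sum_shift_aux (fun i => U i ω) m 0 l h2]
        have := h l h1 h2
        rw [hY] at this
        simpa using this
      · intro h l h1 h2
        have := h l h1 h2
        rw [sum_shift_aux (fun i => U i ω) m 0 l h2] at this
        rw [hY]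
        simpa using this
    rw [h1, h2, hBval k, hBval 0]
  -- exponent comparison
  have hp1 : p ≤ 1 := prob_le_one
  have hpow : p ^ (κ' * m + 1 : ℝ) ≤ p ^ k := by
    rw [← ENNReal.rpow_natCast p k]
    exact ENNReal.rpow_le_rpow_of_exponent_ge hp1 hkle
  -- measurability of the target event (for monotonicity we just need measure mono)
  calc p ^ (κ' * m + 1 : ℝ) * μ {ω | ∀ j, 1 ≤ j → j ≤ m → 0 ≤ Y j ω}
      ≤ p ^ k * μ B := by
        rw [hBeq]
        exact mul_le_mul_left hpow _
    _ = μ A * μ B := by rw [hA_val]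
    _ = μ (A ∩ B) := hindep.symm
    _ ≤ μ {ω | ∀ j, 1 ≤ j → j ≤ m → ε * j ≤ Y j ω} := measure_mono hsub

end
end

section
/- Let (M_k)_{k≥1} be a sequence in ℕ₀ ∪ {∞} with M₁ = 0 and let {ξ_i^{(k)} : i, k ≥ 1} be nonnegative integers. Define W₀ = 0 and W_k = Σ_{i=1}^{(W_{k−1}+1−M_k)₊} ξ_i^{(k)}, and Z₀ = 1 and Z_k = (Σ_{i=1}^{Z_{k−1}} ξ_i^{(k)} − M_{k+1})₊, and set T₀^W = inf{k ≥ 1 : W_k = 0} and T₀^Z = inf{k ≥ 1 : Z_k = 0}. Then (W_k − M_{k+1} + 1)₊ ≥ Z_k for all 0 ≤ k ≤ T₀^W, and Z_k ≤ W_k for all 1 ≤ k ≤ T₀^W; in particular T₀^Z ≤ T₀^W and Σ_{k=1}^{T₀^W − 1} W_k ≥ Σ_{k=1}^{T₀^Z − 1} Z_k. -/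
open Finset ENNReal

noncomputable section

/-- **Deterministic coupling of the two branching processes with emigration**
(Section 4, third part): let `(M_k)_{k≥1}` take values in `ℕ₀ ∪ {∞}` with `M₁ = 0`,
let `ξ_i⁽ᵏ⁾ ∈ ℕ₀`, and define `W₀ = 0`, `W_k = ∑_{i=1}^{(W_{k-1}+1-M_k)₊} ξ_i⁽ᵏ⁾`,
`Z₀ = 1`, `Z_k = (∑_{i=1}^{Z_{k-1}} ξ_i⁽ᵏ⁾ − M_{k+1})₊`, with extinction times
`T₀^W = inf{k ≥ 1 : W_k = 0}` and `T₀^Z = inf{k ≥ 1 : Z_k = 0}` (inf ∅ = ∞). Then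
`(W_k − M_{k+1} + 1)₊ ≥ Z_k` for all `0 ≤ k ≤ T₀^W`, `Z_k ≤ W_k` for all
`1 ≤ k ≤ T₀^W`, `T₀^Z ≤ T₀^W`, and `∑_{k=1}^{T₀^W−1} W_k ≥ ∑_{k=1}^{T₀^Z−1} Z_k`. -/
theorem stmt14
    (M : ℕ → ℕ∞) (hM1 : M 1 = 0)
    (ξ : ℕ → ℕ → ℕ)
    (W : ℕ → ℕ) (hW0 : W 0 = 0)
    (hWrec : ∀ k, W (k + 1) =
      ∑ i ∈ Finset.range ((((W k : ℕ∞) + 1) - M (k + 1)).toNat), ξ (i + 1) (k + 1))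
    (Z : ℕ → ℕ) (hZ0 : Z 0 = 1)
    (hZrec : ∀ k, Z (k + 1) =
      ((((∑ i ∈ Finset.range (Z k), ξ (i + 1) (k + 1)) : ℕ) : ℕ∞) - M (k + 2)).toNat)
    (TW TZ : ℕ∞)
    (hTW : TW = sInf ((fun k : ℕ => (k : ℕ∞)) '' {k : ℕ | 1 ≤ k ∧ W k = 0}))
    (hTZ : TZ = sInf ((fun k : ℕ => (k : ℕ∞)) '' {k : ℕ | 1 ≤ k ∧ Z k = 0})) :
    (∀ k : ℕ, (k : ℕ∞) ≤ TW → Z k ≤ (((W k : ℕ∞) + 1) - M (k + 1)).toNat) ∧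
    (∀ k : ℕ, 1 ≤ k → (k : ℕ∞) ≤ TW → Z k ≤ W k) ∧
    TZ ≤ TW ∧
    (∑' k : ℕ, (if 1 ≤ k ∧ (k : ℕ∞) < TZ then (Z k : ℝ≥0∞) else 0))
      ≤ ∑' k : ℕ, (if 1 ≤ k ∧ (k : ℕ∞) < TW then (W k : ℝ≥0∞) else 0) := by

  have key : ∀ k, Z k ≤ (((W k : ℕ∞) + 1) - M (k + 1)).toNat := by
    intro k
    induction k with
    | zero => simp [hZ0, hW0, hM1]
    | succ k ih =>
      have hS : (∑ i ∈ Finset.range (Z k), ξ (i + 1) (k + 1)) ≤ W (k + 1) := by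
        rw [hWrec]
        exact Finset.sum_le_sum_of_subset (Finset.range_subset_range.mpr ih)
      rw [hZrec]
      have hne : (((W (k + 1) : ℕ∞) + 1) - M (k + 2)) ≠ ⊤ := by
        have h1 : ((W (k + 1) : ℕ∞) + 1) ≠ ⊤ := by
          exact_mod_cast ENat.coe_ne_top (W (k + 1) + 1)
        exact ne_top_of_le_ne_top h1 tsub_le_self
      apply ENat.toNat_le_toNat _ hne
      refine tsub_le_tsub ?_ le_rfl
      exact_mod_cast le_trans hS (Nat.le_succ _)
  have key2 : ∀ k, Z (k + 1) ≤ W (k + 1) := by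
    intro k
    have hS : (∑ i ∈ Finset.range (Z k), ξ (i + 1) (k + 1)) ≤ W (k + 1) := by
      rw [hWrec]
      exact Finset.sum_le_sum_of_subset (Finset.range_subset_range.mpr (key k))
    rw [hZrec]
    calc ((((∑ i ∈ Finset.range (Z k), ξ (i + 1) (k + 1)) : ℕ) : ℕ∞) - M (k + 2)).toNat
        ≤ (((∑ i ∈ Finset.range (Z k), ξ (i + 1) (k + 1)) : ℕ) : ℕ∞).toNat := by
          exact ENat.toNat_le_toNat tsub_le_self (ENat.coe_ne_top _)
      _ = ∑ i ∈ Finset.range (Z k), ξ (i + 1) (k + 1) := ENat.toNat_coe _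
      _ ≤ W (k + 1) := hS
  have hTZW : TZ ≤ TW := by
    rw [hTZ, hTW]
    apply sInf_le_sInf
    apply Set.image_mono
    rintro k ⟨hk, hw⟩
    obtain ⟨j, rfl⟩ := Nat.exists_eq_succ_of_ne_zero (by omega : k ≠ 0)
    exact ⟨hk, Nat.le_antisymm (hw ▸ key2 j) (Nat.zero_le _)⟩
  refine ⟨fun k _ => key k, fun k hk _ => ?_, hTZW, ?_⟩
  · obtain ⟨j, rfl⟩ := Nat.exists_eq_succ_of_ne_zero (by omega : k ≠ 0)
    exact key2 j
  · apply Summable.tsum_le_tsum _ ENNReal.summable ENNReal.summable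
    intro k
    by_cases h : 1 ≤ k ∧ (k : ℕ∞) < TZ
    · rw [if_pos h, if_pos ⟨h.1, lt_of_lt_of_le h.2 hTZW⟩]
      obtain ⟨j, rfl⟩ := Nat.exists_eq_succ_of_ne_zero (by omega : k ≠ 0)
      exact_mod_cast key2 j
    · rw [if_neg h]
      exact zero_le
end
end
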